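/- For 2×2 Hermitian positive definite matrices A and B, A # B = (√(αβ)/√(det(α^{-1}A + β^{-1}B))) · (α^{-1}A + β^{-1}B), where α = √(det A) and β = √(det B). -/

import Mathlib

open Matrix ComplexOrder

namespace Matrix.PosSemidef

/-- The square root of a positive semidefinite matrix (Mathlib's former `Matrix.PosSemidef.sqrt`). -/
noncomputable def sqrt {n : Type*} [Fintype n] [DecidableEq n] {𝕜 : Type*} [RCLike 𝕜]
    {A : Matrix n n 𝕜} (hA : PosSemidef A) : Matrix n n 𝕜 :=
  hA.1.eigenvectorUnitary.1 * diagonal ((↑) ∘ Real.sqrt ∘ hA.1.eigenvalues) *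
  (star hA.1.eigenvectorUnitary : Matrix n n 𝕜)

lemma posSemidef_sqrt {n : Type*} [Fintype n] [DecidableEq n] {𝕜 : Type*} [RCLike 𝕜]
    {A : Matrix n n 𝕜} (hA : PosSemidef A) : PosSemidef hA.sqrt := by
  apply PosSemidef.mul_mul_conjTranspose_same
  refine posSemidef_diagonal_iff.mpr fun i ↦ ?_
  rw [Function.comp_apply, RCLike.nonneg_iff]
  constructor
  · simp only [RCLike.ofReal_re]
    exact Real.sqrt_nonneg _
  · simp only [RCLike.ofReal_im]

end Matrix.PosSemidef

lemma geomMean_aux {n : ℕ} {A B : Matrix (Fin n) (Fin n) ℂ} (hA : A.PosDef) (hB : B.PosDef) :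
    ((hA.posSemidef.sqrt)⁻¹ * B * (hA.posSemidef.sqrt)⁻¹).PosSemidef := by
  have h := hB.posSemidef.conjTranspose_mul_mul_same (hA.posSemidef.sqrt)⁻¹
  rwa [(hA.posSemidef.posSemidef_sqrt.isHermitian.inv).eq] at h

/-- The geometric mean `A # B = A^{1/2} (A^{-1/2} B A^{-1/2})^{1/2} A^{1/2}` of two
Hermitian positive definite matrices. -/
noncomputable def geomMean {n : ℕ} {A B : Matrix (Fin n) (Fin n) ℂ}
    (hA : A.PosDef) (hB : B.PosDef) : Matrix (Fin n) (Fin n) ℂ :=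
  hA.posSemidef.sqrt * (geomMean_aux hA hB).sqrt * hA.posSemidef.sqrt

namespace Matrix.PosSemidef

open scoped MatrixOrder in
lemma sqrt_eq_cfcSqrt {n : Type*} [Fintype n] [DecidableEq n] {𝕜 : Type*} [RCLike 𝕜]
    {A : Matrix n n 𝕜} (hA : PosSemidef A) : hA.sqrt = CFC.sqrt A := by
  rw [CFC.sqrt_eq_real_sqrt A hA.nonneg, cfcₙ_eq_cfc, hA.1.cfc_eq, IsHermitian.cfc, Unitary.conjStarAlgAut_apply]
  rfl

open scoped MatrixOrder in
lemma sqrt_mul_self {n : Type*} [Fintype n] [DecidableEq n] {𝕜 : Type*} [RCLike 𝕜]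
    {A : Matrix n n 𝕜} (hA : PosSemidef A) : hA.sqrt * hA.sqrt = A := by
  rw [sqrt_eq_cfcSqrt]
  exact CFC.sqrt_mul_sqrt_self A hA.nonneg

open scoped MatrixOrder in
lemma eq_sqrt_of_sq_eq {n : Type*} [Fintype n] [DecidableEq n] {𝕜 : Type*} [RCLike 𝕜]
    {X A : Matrix n n 𝕜} (hX : PosSemidef X) (hA : PosSemidef A) (h : X ^ 2 = A) :
    X = hA.sqrt := by
  rw [sqrt_eq_cfcSqrt, eq_comm, CFC.sqrt_eq_iff A X hA.nonneg hX.nonneg, ← sq, h]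

end Matrix.PosSemidef

lemma adj_add (X Y : Matrix (Fin 2) (Fin 2) ℂ) :
    adjugate (X + Y) = adjugate X + adjugate Y := by
  ext i j
  fin_cases i <;> fin_cases j <;>
    (simp [adjugate_fin_two]; try ring)

lemma adj_smul (c : ℂ) (X : Matrix (Fin 2) (Fin 2) ℂ) :
    adjugate (c • X) = c • adjugate X := by
  rw [adjugate_smul]
  norm_num

lemma smul_psd {X : Matrix (Fin 2) (Fin 2) ℂ} (hX : X.PosSemidef) {r : ℝ} (hr : 0 ≤ r) :
    ((r : ℂ) • X).PosSemidef := by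
  constructor
  · unfold Matrix.IsHermitian
    rw [conjTranspose_smul, hX.isHermitian.eq, Complex.star_def, Complex.conj_ofReal]
  · intro x
    exact (hX.smul (a := (r : ℂ)) (by exact_mod_cast hr)).2 x

lemma key_identity (A B : Matrix (Fin 2) (Fin 2) ℂ) (a b g : ℂ) (ha : a ≠ 0) (hb : b ≠ 0)
    (hdA : A.det = a ^ 2) (hdB : B.det = b ^ 2)
    (hdM : (a⁻¹ • A + b⁻¹ • B).det = g ^ 2) :
    (a⁻¹ • A + b⁻¹ • B) * A⁻¹ * (a⁻¹ • A + b⁻¹ • B) = (a⁻¹ * b⁻¹ * g ^ 2) • B := by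
  have h1 : A * adjugate A = a ^ 2 • (1 : Matrix (Fin 2) (Fin 2) ℂ) := by
    rw [mul_adjugate, hdA]
  have h2 : adjugate A * A = a ^ 2 • (1 : Matrix (Fin 2) (Fin 2) ℂ) := by
    rw [adjugate_mul, hdA]
  have h3 : adjugate B * B = b ^ 2 • (1 : Matrix (Fin 2) (Fin 2) ℂ) := by
    rw [adjugate_mul, hdB]
  have h3' : B * adjugate B = b ^ 2 • (1 : Matrix (Fin 2) (Fin 2) ℂ) := by
    rw [mul_adjugate, hdB]
  have hAdjM : adjugate (a⁻¹ • A + b⁻¹ • B) = a⁻¹ • adjugate A + b⁻¹ • adjugate B := by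
    rw [adj_add, adj_smul, adj_smul]
  have hMadjM : (a⁻¹ • A + b⁻¹ • B) * adjugate (a⁻¹ • A + b⁻¹ • B)
      = g ^ 2 • (1 : Matrix (Fin 2) (Fin 2) ℂ) := by
    rw [mul_adjugate, hdM]
  have expand : (a⁻¹ • A + b⁻¹ • B) * adjugate (a⁻¹ • A + b⁻¹ • B)
      = (2 : ℂ) • (1 : Matrix (Fin 2) (Fin 2) ℂ)
        + (a⁻¹ * b⁻¹) • (A * adjugate B + B * adjugate A) := by
    rw [hAdjM]
    simp only [add_mul, mul_add, smul_mul_assoc, mul_smul_comm, h1, h3', smul_smul, smul_add]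
    match_scalars <;> field_simp <;> ring
  have h4 : A * adjugate B + B * adjugate A
      = (a * b * g ^ 2 - 2 * (a * b)) • (1 : Matrix (Fin 2) (Fin 2) ℂ) := by
    have h := hMadjM.symm.trans expand
    have h' : (a⁻¹ * b⁻¹) • (A * adjugate B + B * adjugate A)
        = g ^ 2 • (1 : Matrix (Fin 2) (Fin 2) ℂ) - (2 : ℂ) • 1 := by
      rw [eq_sub_iff_add_eq, add_comm, ← h]
    calc A * adjugate B + B * adjugate A
        = (a * b) • ((a⁻¹ * b⁻¹) • (A * adjugate B + B * adjugate A)) := by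
          rw [smul_smul]
          field_simp
          rw [one_smul]
      _ = (a * b) • (g ^ 2 • (1 : Matrix (Fin 2) (Fin 2) ℂ) - (2 : ℂ) • 1) := by rw [h']
      _ = (a * b * g ^ 2 - 2 * (a * b)) • 1 := by
          rw [smul_sub, smul_smul, smul_smul, ← sub_smul]
          ring_nf
  have h5 : B * adjugate A * B
      = (a * b * g ^ 2 - 2 * (a * b)) • B - b ^ 2 • A := by
    have hBadjA : B * adjugate A
        = (a * b * g ^ 2 - 2 * (a * b)) • (1 : Matrix (Fin 2) (Fin 2) ℂ) - A * adjugate B :=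
      eq_sub_of_add_eq' h4
    calc B * adjugate A * B
        = ((a * b * g ^ 2 - 2 * (a * b)) • (1 : Matrix (Fin 2) (Fin 2) ℂ)
            - A * adjugate B) * B := by rw [hBadjA]
      _ = (a * b * g ^ 2 - 2 * (a * b)) • B - A * (adjugate B * B) := by
          rw [sub_mul, smul_mul_assoc, one_mul, mul_assoc A]
      _ = (a * b * g ^ 2 - 2 * (a * b)) • B - b ^ 2 • A := by
          rw [h3, mul_smul_comm, mul_one]
  have hA1 : A * adjugate A * A = a ^ 2 • A := by rw [h1, smul_mul_assoc, one_mul]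
  have hA2 : A * adjugate A * B = a ^ 2 • B := by rw [h1, smul_mul_assoc, one_mul]
  have hA3 : B * adjugate A * A = a ^ 2 • B := by
    rw [mul_assoc, h2, mul_smul_comm, mul_one]
  have hAinv : A⁻¹ = (a ^ 2)⁻¹ • adjugate A := by
    rw [Matrix.inv_def, hdA, Ring.inverse_eq_inv']
  rw [hAinv]
  simp only [add_mul, mul_add, smul_mul_assoc, mul_smul_comm, smul_smul, smul_add, smul_sub,
    hA1, hA2, hA3, h5]
  match_scalars <;> field_simp <;> ring

/-- Explicit formula for the geometric mean of two `2 × 2` positive definite matrices: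
`A # B = (√(αβ)/√(det(α⁻¹A + β⁻¹B))) (α⁻¹A + β⁻¹B)` with `α = √(det A)`, `β = √(det B)`. -/
theorem geomMean_two_by_two {A B : Matrix (Fin 2) (Fin 2) ℂ}
    (hA : A.PosDef) (hB : B.PosDef)
    (α β γ : ℝ) (hα : 0 < α) (hβ : 0 < β) (hγ : 0 < γ)
    (hα2 : (α : ℂ) ^ 2 = A.det) (hβ2 : (β : ℂ) ^ 2 = B.det)
    (hγ2 : (γ : ℂ) ^ 2 = ((α : ℂ)⁻¹ • A + (β : ℂ)⁻¹ • B).det) :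
    geomMean hA hB =
      ((Real.sqrt (α * β) / γ : ℝ) : ℂ) • ((α : ℂ)⁻¹ • A + (β : ℂ)⁻¹ • B) := by
  have ha : (α : ℂ) ≠ 0 := by exact_mod_cast hα.ne'
  have hb : (β : ℂ) ≠ 0 := by exact_mod_cast hβ.ne'
  have hg : (γ : ℂ) ≠ 0 := by exact_mod_cast hγ.ne'
  set c : ℝ := Real.sqrt (α * β) / γ with hc
  set M : Matrix (Fin 2) (Fin 2) ℂ := (α : ℂ)⁻¹ • A + (β : ℂ)⁻¹ • B with hMdef
  set C : Matrix (Fin 2) (Fin 2) ℂ := ((c : ℝ) : ℂ) • M with hCdef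
  have hkey := key_identity A B (α : ℂ) (β : ℂ) (γ : ℂ) ha hb hα2.symm hβ2.symm hγ2.symm
  have hcc : ((c : ℝ) : ℂ) * ((c : ℝ) : ℂ) = (α : ℂ) * (β : ℂ) / (γ : ℂ) ^ 2 := by
    have h1 : c * c = α * β / γ ^ 2 := by
      rw [hc, div_mul_div_comm, Real.mul_self_sqrt (by positivity), sq]
    calc ((c : ℝ) : ℂ) * ((c : ℝ) : ℂ) = (((c * c : ℝ)) : ℂ) := by push_cast; ring
      _ = _ := by rw [h1]; push_cast; ring
  have hCAC : C * A⁻¹ * C = B := by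
    rw [hCdef, smul_mul_assoc, smul_mul_assoc, mul_smul_comm, hkey, smul_smul, smul_smul]
    have hone : ((c : ℝ) : ℂ) * ((c : ℝ) : ℂ) * ((α : ℂ)⁻¹ * (β : ℂ)⁻¹ * (γ : ℂ) ^ 2) = 1 := by
      rw [hcc]
      field_simp
    rw [hone, one_smul]
  set S : Matrix (Fin 2) (Fin 2) ℂ := hA.posSemidef.sqrt with hSdef
  have hS : S * S = A := hA.posSemidef.sqrt_mul_self
  have hSH : S.IsHermitian := hA.posSemidef.posSemidef_sqrt.isHermitian
  have hdetS : IsUnit S.det := by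
    have hss : S.det * S.det = A.det := by rw [← det_mul, hS]
    have hAdet : A.det ≠ 0 := by rw [← hα2]; exact pow_ne_zero _ ha
    exact isUnit_iff_ne_zero.mpr (fun h => hAdet (by rw [← hss, h, zero_mul]))
  have hST : S * S⁻¹ = 1 := mul_nonsing_inv S hdetS
  have hTS : S⁻¹ * S = 1 := nonsing_inv_mul S hdetS
  have hTT : S⁻¹ * S⁻¹ = A⁻¹ := by rw [← hS, Matrix.mul_inv_rev]
  set X : Matrix (Fin 2) (Fin 2) ℂ := S⁻¹ * C * S⁻¹ with hXdef
  have hXsq : X ^ 2 = S⁻¹ * B * S⁻¹ := by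
    rw [pow_two, hXdef]
    calc S⁻¹ * C * S⁻¹ * (S⁻¹ * C * S⁻¹)
        = S⁻¹ * C * (S⁻¹ * S⁻¹) * (C * S⁻¹) := by simp only [Matrix.mul_assoc]
      _ = S⁻¹ * (C * A⁻¹ * C) * S⁻¹ := by rw [hTT]; simp only [Matrix.mul_assoc]
      _ = S⁻¹ * B * S⁻¹ := by rw [hCAC]
  have hXpsd : X.PosSemidef := by
    have hMpsd : M.PosSemidef := by
      have h1 := smul_psd hA.posSemidef (inv_nonneg.mpr hα.le)
      have h2 := smul_psd hB.posSemidef (inv_nonneg.mpr hβ.le)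
      rw [Complex.ofReal_inv] at h1 h2
      exact h1.add h2
    have hCpsd : C.PosSemidef := smul_psd hMpsd (by positivity)
    have h := hCpsd.conjTranspose_mul_mul_same (S⁻¹)
    rwa [(hSH.inv).eq] at h
  have hsqrtX : X = (geomMean_aux hA hB).sqrt :=
    hXpsd.eq_sqrt_of_sq_eq (geomMean_aux hA hB) hXsq
  show S * (geomMean_aux hA hB).sqrt * S = C
  rw [← hsqrtX, hXdef]
  calc S * (S⁻¹ * C * S⁻¹) * S
      = S * S⁻¹ * (C * (S⁻¹ * S)) := by simp only [Matrix.mul_assoc]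
    _ = C := by rw [hST, hTS, one_mul, mul_one]
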